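/- Let x, y ∈ ℝ and c ∈ [-1,1] with x² + y² + xy - x - y = 0. Define A = (1 - x - y + xc)/2 and D = (1 + 2yc + y² - x²(1-c²))/4, and suppose D ≥ 0 and |A + √D| ≤ 1. Then with cos ω = A + √D and cos η = A - √D, the quartic z⁴ - 2(1-x-y+xc)z³ - ((4y - 2y²)c + 2y² - 2)z² - 2(1-x-y+xc)z + 1 factors as (z² - 2z cos ω + 1)(z² - 2z cos η + 1). -/
import Mathlib


theorem stmt_17 (x y c : ℝ) (hc : -1 ≤ c) (hc' : c ≤ 1)
    (hxy : x^2 + y^2 + x*y - x - y = 0)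
    (A D : ℝ) (hA : A = (1 - x - y + x*c)/2)
    (hD : D = (1 + 2*y*c + y^2 - x^2*(1 - c^2))/4)
    (hDpos : 0 ≤ D) (hbound : |A + Real.sqrt D| ≤ 1)
    (ω η : ℝ) (hω : Real.cos ω = A + Real.sqrt D) (hη : Real.cos η = A - Real.sqrt D) :
    ∀ z : ℂ,
      z^4 - 2*((1 - x - y + x*c : ℝ) : ℂ)*z^3
        - (((4*y - 2*y^2)*c + 2*y^2 - 2 : ℝ) : ℂ)*z^2
        - 2*((1 - x - y + x*c : ℝ) : ℂ)*z + 1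
      = (z^2 - 2*z*((Real.cos ω : ℝ) : ℂ) + 1) * (z^2 - 2*z*((Real.cos η : ℝ) : ℂ) + 1) := by
  have hs : Real.sqrt D ^ 2 = D := Real.sq_sqrt hDpos
  have h1 : Real.cos ω + Real.cos η = 1 - x - y + x*c := by
    rw [hω, hη, hA]; ring
  have h2 : 4 * (Real.cos ω * Real.cos η) = -((4*y - 2*y^2)*c + 2*y^2 - 2) - 2 := by
    rw [hω, hη]
    have : (A + Real.sqrt D) * (A - Real.sqrt D) = A^2 - D := by
      linear_combination -hs
    rw [this, hA, hD]
    nlinarith [hxy, sq_nonneg c]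
  intro z
  have e1 : ((Real.cos ω : ℂ)) + ((Real.cos η : ℂ)) = ((1 - x - y + x*c : ℝ) : ℂ) := by
    exact_mod_cast congrArg (Complex.ofReal) h1
  have e2 : 4 * (((Real.cos ω : ℂ)) * ((Real.cos η : ℂ)))
      = -(((4*y - 2*y^2)*c + 2*y^2 - 2 : ℝ) : ℂ) - 2 := by
    exact_mod_cast congrArg (Complex.ofReal) h2
  linear_combination (2*z^3 + 2*z) * e1 - z^2 * e2
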